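/- Let f ∈ (0,1) and κ, γ₁, γ₂, γ₃ > 0, and let u* ∈ (0,1)⁴ be a steady state of the ZIP regulatory system, i.e. F(u*) = 0. Then u₃* lies in the open interval S₃ = (1/(1+γ₁), 1), u₃* is a root of the polynomial φ, and the other components are determined by u₃* through u₁* = κ·u₃*²/(1+κ·u₃*²), u₂* = f·κ·u₃*²/(1+κ·u₃*²), and u₄* = (1−u₃*)/(γ₁·u₃*). -/
import Mathlib


/-- The ZIP regulatory vector field on ℝ⁴ (components indexed by `Fin 4`). -/
noncomputable def zipField (κ γ₁ γ₂ γ₃ f : ℝ) (u : Fin 4 → ℝ) : Fin 4 → ℝ :=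
  ![κ * (u 2) ^ 2 * (1 - u 0) - u 0,
    u 0 * f - u 1,
    1 - γ₁ * u 2 * u 3 - u 2,
    γ₂ * u 1 - γ₃ * u 2 * u 3 - (1 + γ₂ * u 1) * u 3]

/-- The quartic polynomial φ whose roots in S₃ correspond to steady states. -/
noncomputable def zipPhi (κ γ₁ γ₂ γ₃ f : ℝ) (x : ℝ) : ℝ :=
  γ₃ * κ * x ^ 4 + (f * γ₂ * (1 + γ₁) + 1 - γ₃) * κ * x ^ 3 +
    (γ₃ - κ - f * γ₂ * κ) * x ^ 2 + (1 - γ₃) * x - 1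

/-- any interior steady state u* of the ZIP regulatory system has
u₃* ∈ S₃ = (1/(1+γ₁), 1), u₃* is a root of φ, and the other components are
determined by u₃*. -/
theorem zip_steady_state_characterization
    (κ γ₁ γ₂ γ₃ f : ℝ) (hκ : 0 < κ) (hγ₁ : 0 < γ₁) (hγ₂ : 0 < γ₂) (hγ₃ : 0 < γ₃)
    (hf : f ∈ Set.Ioo (0 : ℝ) 1)
    (u : Fin 4 → ℝ) (hu : ∀ i, u i ∈ Set.Ioo (0 : ℝ) 1)
    (hsteady : zipField κ γ₁ γ₂ γ₃ f u = 0) :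
    u 2 ∈ Set.Ioo (1 / (1 + γ₁)) 1 ∧
    zipPhi κ γ₁ γ₂ γ₃ f (u 2) = 0 ∧
    u 0 = κ * (u 2) ^ 2 / (1 + κ * (u 2) ^ 2) ∧
    u 1 = f * κ * (u 2) ^ 2 / (1 + κ * (u 2) ^ 2) ∧
    u 3 = (1 - u 2) / (γ₁ * u 2) := by
  have h0 := congrFun hsteady 0
  have h1 := congrFun hsteady 1
  have h2 := congrFun hsteady 2
  have h3 := congrFun hsteady 3
  simp [zipField] at h0 h1 h2 h3
  obtain ⟨hu0, hu0'⟩ := hu 0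
  obtain ⟨hu1, hu1'⟩ := hu 1
  obtain ⟨hu2, hu2'⟩ := hu 2
  obtain ⟨hu3, hu3'⟩ := hu 3
  have hden : (0:ℝ) < 1 + κ * (u 2) ^ 2 := by positivity
  have hE0 : u 0 = κ * (u 2) ^ 2 / (1 + κ * (u 2) ^ 2) := by
    field_simp
    linarith [h0]
  have hE1 : u 1 = f * κ * (u 2) ^ 2 / (1 + κ * (u 2) ^ 2) := by
    have h1' : u 1 = u 0 * f := by linarith
    rw [h1', hE0]; ring
  have hE3 : u 3 = (1 - u 2) / (γ₁ * u 2) := by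
    field_simp
    linarith [h2]
  have hlow : 1 / (1 + γ₁) < u 2 := by
    rw [div_lt_iff₀ (by linarith)]
    nlinarith [h2, hu3']
  refine ⟨⟨hlow, hu2'⟩, ?_, hE0, hE1, hE3⟩
  have h3' := h3
  rw [hE1, hE3] at h3'
  unfold zipPhi
  have hg : γ₁ * u 2 ≠ 0 := by positivity
  have hd : (1 + κ * (u 2) ^ 2) ≠ 0 := by positivity
  field_simp at h3'
  nlinarith [h3', sq_nonneg (u 2)]
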